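/- Let n, k be positive integers and let S = {S_1, ..., S_k} be a set system with S_i ⊆ [n] for all i ∈ [k]. Suppose S satisfies the MDS condition and, for all i ∈ [k], |S_1 ∩ S_2 ∩ ... ∩ S_i| = k - i. Then for any prime power q with q ≥ n, there exists a k×n MDS matrix A over the finite field F_q such that A_{i,j} = 0 if and only if j ∈ S_i. -/

import Mathlib

open Polynomial Finset

lemma mem_finset_inf_finset {ι β : Type*} [DecidableEq β] [Fintype β] {s : Finset ι}
    {f : ι → Finset β} {a : β} : a ∈ s.inf f ↔ ∀ i ∈ s, a ∈ f i := by
  induction s using Finset.cons_induction with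
  | empty => simp [Finset.top_eq_univ]
  | cons i s hi ih => simp [Finset.inf_cons, ih]

/-- Let `n, k` be positive integers and `S = {S_1, ..., S_k}` a set system with
`S_i ⊆ [n]`. Suppose `S` satisfies the MDS condition (for every nonempty `I ⊆ [k]`,
`|I| + |∩_{i∈I} S_i| ≤ k`) and, for all `i ∈ [k]`, `|S_1 ∩ ... ∩ S_i| = k - i`.
Then over any finite field of size at least `n` there exists a `k × n` MDS matrix `A`
(every `k × k` submatrix is invertible) with `A i j = 0` iff `j ∈ S_i`. -/
theorem stmt_0 (n k : ℕ) (hn : 0 < n) (hk : 0 < k)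
    (S : Fin k → Finset (Fin n))
    (hMDS : ∀ I : Finset (Fin k), I.Nonempty → I.card + (I.inf S).card ≤ k)
    (hchain : ∀ i : Fin k, ((Finset.Iic i).inf S).card = k - (i.val + 1))
    (F : Type) [Field F] [Fintype F] (hcard : n ≤ Fintype.card F) :
    ∃ A : Matrix (Fin k) (Fin n) F,
      (∀ g : Fin k → Fin n, Function.Injective g → (A.submatrix id g).det ≠ 0) ∧
      (∀ (i : Fin k) (j : Fin n), A i j = 0 ↔ j ∈ S i) := by
  classical
  obtain ⟨α⟩ : Nonempty (Fin n ↪ F) :=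
    Function.Embedding.nonempty_of_card_le (by simpa using hcard)
  set p : Fin k → F[X] := fun i => ∏ t ∈ S i, (X - C (α t)) with hp
  have hmonic : ∀ i, (p i).Monic := fun i => monic_prod_of_monic _ _ (fun t _ => monic_X_sub_C _)
  have hdeg : ∀ i, (p i).natDegree < k := by
    intro i
    have h1 : (p i).natDegree = (S i).card := by
      rw [hp]; rw [natDegree_prod_of_monic _ _ (fun t _ => monic_X_sub_C _)]; simp
    have h2 := hMDS {i} ⟨i, by simp⟩
    simp only [Finset.card_singleton, Finset.inf_singleton] at h2
    omega
  have heval : ∀ i (x : F), (p i).eval x = ∏ t ∈ S i, (x - α t) := by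
    intro i x; rw [hp]; simp [eval_prod]
  have hevalne : ∀ (i : Fin k) (j : Fin n), j ∉ S i → (p i).eval (α j) ≠ 0 := by
    intro i j hj
    rw [heval]
    refine Finset.prod_ne_zero_iff.2 fun t ht => ?_
    exact sub_ne_zero.2 (fun h => hj ((α.injective h) ▸ ht))
  have hevalzero : ∀ (i : Fin k) (j : Fin n), j ∈ S i → (p i).eval (α j) = 0 := by
    intro i j hj
    rw [heval]
    exact Finset.prod_eq_zero hj (by simp)
  -- key independence statement
  have hindep : ∀ v : Fin k → F, (∑ i, C (v i) * p i) = 0 → v = 0 := by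
    intro v hv
    by_contra hvne
    have hne : (Finset.univ.filter (fun i => v i ≠ 0)).Nonempty := by
      rcases Function.ne_iff.1 hvne with ⟨i, hi⟩
      exact ⟨i, by simp only [Finset.mem_filter, Finset.mem_univ, true_and]; exact hi⟩
    set m := (Finset.univ.filter (fun i => v i ≠ 0)).max' hne with hm
    have hvm : v m ≠ 0 := by
      have := (Finset.univ.filter (fun i => v i ≠ 0)).max'_mem hne
      simpa using this
    have hmax : ∀ i, m < i → v i = 0 := by
      intro i hi
      by_contra h
      exact absurd (Finset.le_max' _ i (by simp [h])) (not_le.2 hi)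
    rcases Nat.eq_zero_or_pos m.val with h0 | hpos
    · -- m is the smallest index: only term m survives as polynomials
      rw [Finset.sum_eq_single m] at hv
      · rcases mul_eq_zero.1 hv with h | h
        · exact hvm (by simpa using h)
        · exact (hmonic m).ne_zero h
      · intro i _ hi
        have : m < i := by
          rcases lt_or_gt_of_ne hi with h | h
          · exact absurd (Fin.lt_iff_val_lt_val.1 h) (by omega)
          · exact h
        rw [hmax i this, map_zero, zero_mul]
      · simp
    · -- m ≥ 1
      set m' : Fin k := ⟨m.val - 1, by omega⟩ with hm'
      obtain ⟨t, ht1, ht2⟩ : ∃ t : Fin n, t ∈ (Finset.Iic m').inf S ∧ t ∉ S m := by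
        by_contra hc
        push_neg at hc
        have hsub : (Finset.Iic m').inf S ≤ S m := fun t ht => hc t ht
        have heq : (Finset.Iic m).inf S = (Finset.Iic m').inf S := by
          apply le_antisymm
          · exact Finset.inf_mono (Finset.Iic_subset_Iic.2 (by
              simp only [Fin.le_iff_val_le_val, hm']; omega))
          · apply Finset.le_inf
            intro i hi
            simp only [Finset.mem_Iic] at hi
            rcases eq_or_lt_of_le hi with rfl | hlt
            · exact hsub
            · exact Finset.inf_le (Finset.mem_Iic.2 (by
                simp [Fin.le_iff_val_le_val, hm']
                omega))
        have h1 := hchain m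
        have h2 := hchain m'
        rw [heq, h2] at h1
        simp only [hm'] at h1
        omega
      have ht1' : ∀ i, i < m → t ∈ S i := by
        intro i hi
        exact mem_finset_inf_finset.1 ht1 i (Finset.mem_Iic.2 (by
          simp [Fin.le_iff_val_le_val, hm']; omega))
      have := congrArg (Polynomial.eval (α t)) hv
      simp only [eval_finset_sum, eval_mul, eval_C, eval_zero] at this
      rw [Finset.sum_eq_single m] at this
      · rcases mul_eq_zero.1 this with h | h
        · exact hvm h
        · exact hevalne m t ht2 h
      · intro i _ hi
        rcases lt_or_gt_of_ne hi with h | h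
        · rw [hevalzero i t (ht1' i h), mul_zero]
        · rw [hmax i h, zero_mul]
      · simp
  -- the matrix
  refine ⟨fun i j => (p i).eval (α j), ?_, ?_⟩
  · intro g hg hdet
    obtain ⟨v, hv0, hv⟩ := Matrix.exists_vecMul_eq_zero_iff.2 hdet
    set P : F[X] := ∑ i, C (v i) * p i with hP
    have hPdeg : P.natDegree < k := by
      rcases Nat.exists_eq_succ_of_ne_zero hk.ne' with ⟨k', rfl⟩
      have : P.natDegree ≤ k' := by
        apply natDegree_sum_le_of_forall_le
        intro i _
        refine le_trans natDegree_mul_le ?_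
        simp only [natDegree_C, zero_add]
        have := hdeg i; omega
      omega
    have hPeval : ∀ j : Fin k, P.eval (α (g j)) = 0 := by
      intro j
      have := congrFun hv j
      simp only [Matrix.vecMul, dotProduct, Matrix.submatrix_apply, id_eq,
        Pi.zero_apply] at this
      rw [hP]
      simpa [eval_finset_sum, Matrix.submatrix] using this
    have hPzero : P = 0 := by
      apply Polynomial.eq_zero_of_natDegree_lt_card_of_eval_eq_zero P
        (f := fun j : Fin k => α (g j)) (fun a b hab => hg (α.injective hab)) hPeval
      exact lt_of_lt_of_eq hPdeg (Fintype.card_fin _).symm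
    exact hv0 (hindep v (hP ▸ hPzero))
  · intro i j
    constructor
    · intro h
      by_contra hj
      exact hevalne i j hj h
    · exact hevalzero i j
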